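/- If t is a positive integer with t ≡ 3 (mod 18), then a₃(t) = (2t² − 32t + 78)/9. -/

import Mathlib

/-- A 3×3 magic square with magic sum `t`: pairwise distinct positive integer entries,
all row sums, column sums, and both main diagonal sums equal to `t`. -/
def IsMagicSquare3 (t : ℕ) (M : Matrix (Fin 3) (Fin 3) ℕ) : Prop :=
  (∀ i j, 0 < M i j) ∧
  (Function.Injective fun p : Fin 3 × Fin 3 => M p.1 p.2) ∧
  (∀ i, ∑ j, M i j = t) ∧
  (∀ j, ∑ i, M i j = t) ∧
  M 0 0 + M 1 1 + M 2 2 = t ∧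
  M 0 2 + M 1 1 + M 2 0 = t

/-- The number of 3×3 magic squares with magic sum `t`. -/
noncomputable def a3 (t : ℕ) : ℕ := Set.ncard {M : Matrix (Fin 3) (Fin 3) ℕ | IsMagicSquare3 t M}

open Finset

/-- The parameter set: pairs `(a,b)` of offsets for magic squares with center `6k+1`. -/
noncomputable def magicS (k : ℕ) : Finset (ℤ × ℤ) :=
  ((Icc (-(6*k:ℤ)) (6*k)) ×ˢ (Icc (-(6*k:ℤ)) (6*k))).filter fun p =>
    p.1 + p.2 ≤ 6*k ∧ -(6*k:ℤ) ≤ p.1 + p.2 ∧ p.1 - p.2 ≤ 6*k ∧ -(6*k:ℤ) ≤ p.1 - p.2 ∧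
    p.1 ≠ 0 ∧ p.2 ≠ 0 ∧ p.1 ≠ p.2 ∧ p.1 ≠ -p.2 ∧ p.1 ≠ 2*p.2 ∧ p.1 ≠ -(2*p.2) ∧
    p.2 ≠ 2*p.1 ∧ p.2 ≠ -(2*p.1)

/-- A fundamental domain for the dihedral symmetry of the parameter set. -/
noncomputable def magicF (k : ℕ) : Finset (ℤ × ℤ) :=
  ((Icc (1:ℤ) (6*k)) ×ˢ (Icc (1:ℤ) (6*k))).filter fun p =>
    p.2 < p.1 ∧ p.1 + p.2 ≤ 6*k ∧ p.1 ≠ 2*p.2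

/-- The magic square associated to a parameter pair. -/
def mf (k : ℕ) (p : ℤ × ℤ) : Matrix (Fin 3) (Fin 3) ℕ :=
  !![((6*k+1:ℤ) + p.1).toNat, ((6*k+1:ℤ) - p.1 - p.2).toNat, ((6*k+1:ℤ) + p.2).toNat;
     ((6*k+1:ℤ) - p.1 + p.2).toNat, 6*k+1, ((6*k+1:ℤ) + p.1 - p.2).toNat;
     ((6*k+1:ℤ) - p.2).toNat, ((6*k+1:ℤ) + p.1 + p.2).toNat, ((6*k+1:ℤ) - p.1).toNat]

lemma mem_magicS (k : ℕ) (p : ℤ × ℤ) : p ∈ magicS k ↔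
    (p.1 + p.2 ≤ 6*k ∧ -(6*k:ℤ) ≤ p.1 + p.2 ∧ p.1 - p.2 ≤ 6*k ∧ -(6*k:ℤ) ≤ p.1 - p.2 ∧
    p.1 ≠ 0 ∧ p.2 ≠ 0 ∧ p.1 ≠ p.2 ∧ p.1 ≠ -p.2 ∧ p.1 ≠ 2*p.2 ∧ p.1 ≠ -(2*p.2) ∧
    p.2 ≠ 2*p.1 ∧ p.2 ≠ -(2*p.1)) := by
  simp only [magicS, mem_filter, mem_product, mem_Icc]
  constructor
  · tauto
  · intro h; refine ⟨⟨⟨?_, ?_⟩, ?_, ?_⟩, h⟩ <;> omega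

lemma mem_magicF (k : ℕ) (p : ℤ × ℤ) : p ∈ magicF k ↔
    (1 ≤ p.2 ∧ p.2 < p.1 ∧ p.1 + p.2 ≤ 6*k ∧ p.1 ≠ 2*p.2) := by
  simp only [magicF, mem_filter, mem_product, mem_Icc]
  constructor
  · rintro ⟨⟨⟨_,_⟩,_,_⟩,_,_,_⟩; refine ⟨by omega, by omega, by omega, by omega⟩
  · intro h; refine ⟨⟨⟨?_, ?_⟩, ?_, ?_⟩, ?_, ?_, ?_⟩ <;> omega

set_option maxHeartbeats 4000000 in
theorem setEq (k : ℕ) :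
    {M : Matrix (Fin 3) (Fin 3) ℕ | IsMagicSquare3 (18*k+3) M} = ↑((magicS k).image (mf k)) := by
  ext M
  simp only [Set.mem_setOf_eq, coe_image, Set.mem_image, mem_coe]
  constructor
  · rintro ⟨hpos, hinj, hrow, hcol, hd1, hd2⟩
    have hne : ∀ (i j i' j' : Fin 3), ((i,j) : Fin 3 × Fin 3) ≠ (i',j') → M i j ≠ M i' j' :=
      fun i j i' j' hp he => hp (hinj he)
    have r0 : (M 0 0 : ℤ) + M 0 1 + M 0 2 = 18*k+3 := by
      have := hrow 0; rw [Fin.sum_univ_three] at this; exact_mod_cast this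
    have r1 : (M 1 0 : ℤ) + M 1 1 + M 1 2 = 18*k+3 := by
      have := hrow 1; rw [Fin.sum_univ_three] at this; exact_mod_cast this
    have r2 : (M 2 0 : ℤ) + M 2 1 + M 2 2 = 18*k+3 := by
      have := hrow 2; rw [Fin.sum_univ_three] at this; exact_mod_cast this
    have c0 : (M 0 0 : ℤ) + M 1 0 + M 2 0 = 18*k+3 := by
      have := hcol 0; rw [Fin.sum_univ_three] at this; exact_mod_cast this
    have c1 : (M 0 1 : ℤ) + M 1 1 + M 2 1 = 18*k+3 := by
      have := hcol 1; rw [Fin.sum_univ_three] at this; exact_mod_cast this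
    have c2 : (M 0 2 : ℤ) + M 1 2 + M 2 2 = 18*k+3 := by
      have := hcol 2; rw [Fin.sum_univ_three] at this; exact_mod_cast this
    have e1 : (M 0 0 : ℤ) + M 1 1 + M 2 2 = 18*k+3 := by exact_mod_cast hd1
    have e2 : (M 0 2 : ℤ) + M 1 1 + M 2 0 = 18*k+3 := by exact_mod_cast hd2
    have hp : ∀ i j, 1 ≤ (M i j : ℤ) := fun i j => by exact_mod_cast hpos i j
    have hp00 := hp 0 0; have hp01 := hp 0 1; have hp02 := hp 0 2
    have hp10 := hp 1 0; have hp11 := hp 1 1; have hp12 := hp 1 2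
    have hp20 := hp 2 0; have hp21 := hp 2 1; have hp22 := hp 2 2
    have d1 : (M 0 0 : ℤ) ≠ M 1 1 := by
      have := hne 0 0 1 1 (by decide); exact_mod_cast fun e => this (by exact_mod_cast e)
    have d2 : (M 0 2 : ℤ) ≠ M 1 1 := by
      have := hne 0 2 1 1 (by decide); exact fun e => this (by exact_mod_cast e)
    have d3 : (M 0 0 : ℤ) ≠ M 0 2 := by
      have := hne 0 0 0 2 (by decide); exact fun e => this (by exact_mod_cast e)
    have d4 : (M 0 0 : ℤ) ≠ M 2 0 := by
      have := hne 0 0 2 0 (by decide); exact fun e => this (by exact_mod_cast e)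
    have d5 : (M 1 2 : ℤ) ≠ M 0 2 := by
      have := hne 1 2 0 2 (by decide); exact fun e => this (by exact_mod_cast e)
    have d6 : (M 2 1 : ℤ) ≠ M 2 0 := by
      have := hne 2 1 2 0 (by decide); exact fun e => this (by exact_mod_cast e)
    have d7 : (M 1 0 : ℤ) ≠ M 0 0 := by
      have := hne 1 0 0 0 (by decide); exact fun e => this (by exact_mod_cast e)
    have d8 : (M 2 1 : ℤ) ≠ M 2 2 := by
      have := hne 2 1 2 2 (by decide); exact fun e => this (by exact_mod_cast e)
    refine ⟨((M 0 0 : ℤ) - (6*k+1), (M 0 2 : ℤ) - (6*k+1)), ?_, ?_⟩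
    · rw [mem_magicS]
      refine ⟨?_, ?_, ?_, ?_, ?_, ?_, ?_, ?_, ?_, ?_, ?_, ?_⟩ <;> simp only <;> omega
    · ext i j
      fin_cases i <;> fin_cases j <;> simp [mf] <;> omega
  · rintro ⟨p, hpS, rfl⟩
    rw [mem_magicS] at hpS
    obtain ⟨h1, h2, h3, h4, h5, h6, h7, h8, h9, h10, h11, h12⟩ := hpS
    refine ⟨?_, ?_, ?_, ?_, ?_, ?_⟩
    · intro i j; fin_cases i <;> fin_cases j <;> simp [mf] <;> omega
    · intro q q' he
      obtain ⟨i, j⟩ := q; obtain ⟨i', j'⟩ := q'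
      simp only at he
      fin_cases i <;> fin_cases j <;> fin_cases i' <;> fin_cases j' <;>
        first
          | rfl
          | (exfalso; simp [mf] at he; omega)
    · intro i; fin_cases i <;> rw [Fin.sum_univ_three] <;> simp [mf] <;> omega
    · intro j; fin_cases j <;> rw [Fin.sum_univ_three] <;> simp [mf] <;> omega
    · simp [mf]; omega
    · simp [mf]; omega

/-- The eight dihedral symmetries of the parameter set. -/
def oct : Fin 8 → ℤ × ℤ → ℤ × ℤ
  | 0, p => (p.1, p.2)
  | 1, p => (p.2, p.1)
  | 2, p => (-p.1, p.2)
  | 3, p => (p.2, -p.1)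
  | 4, p => (p.1, -p.2)
  | 5, p => (-p.2, p.1)
  | 6, p => (-p.1, -p.2)
  | 7, p => (-p.2, -p.1)

set_option maxHeartbeats 2000000 in
lemma magicS_eq (k : ℕ) :
    magicS k = ((univ : Finset (Fin 8)) ×ˢ magicF k).image (fun q => oct q.1 q.2) := by
  ext ⟨x, y⟩
  simp only [mem_image, mem_product, mem_univ, true_and, Prod.exists]
  constructor
  · intro hm
    rw [mem_magicS] at hm
    obtain ⟨h1, h2, h3, h4, h5, h6, h7, h8, h9, h10, h11, h12⟩ := hm
    simp only at h1 h2 h3 h4 h5 h6 h7 h8 h9 h10 h11 h12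
    have hc : (0 < y ∧ y < x) ∨ (0 < x ∧ x < y) ∨ (x < 0 ∧ 0 < y ∧ y < -x) ∨
        (0 < x ∧ y < 0 ∧ x < -y) ∨ (0 < x ∧ y < 0 ∧ -y < x) ∨ (x < 0 ∧ 0 < y ∧ -x < y) ∨
        (x < y ∧ y < 0) ∨ (y < x ∧ x < 0) := by omega
    rcases hc with h | h | h | h | h | h | h | h
    · exact ⟨0, x, y, by rw [mem_magicF]; simp only; omega, rfl⟩
    · exact ⟨1, y, x, by rw [mem_magicF]; simp only; omega, rfl⟩
    · exact ⟨2, -x, y, by rw [mem_magicF]; simp only; omega, by simp [oct]⟩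
    · exact ⟨3, -y, x, by rw [mem_magicF]; simp only; omega, by simp [oct]⟩
    · exact ⟨4, x, -y, by rw [mem_magicF]; simp only; omega, by simp [oct]⟩
    · exact ⟨5, y, -x, by rw [mem_magicF]; simp only; omega, by simp [oct]⟩
    · exact ⟨6, -x, -y, by rw [mem_magicF]; simp only; omega, by simp [oct]⟩
    · exact ⟨7, -y, -x, by rw [mem_magicF]; simp only; omega, by simp [oct]⟩
  · rintro ⟨i, a, b, hab, he⟩
    rw [mem_magicF] at hab
    simp only at hab
    rw [mem_magicS]
    fin_cases i <;> simp [oct] at he <;>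
      (refine ⟨?_,?_,?_,?_,?_,?_,?_,?_,?_,?_,?_,?_⟩ <;> simp only <;> omega)

set_option maxHeartbeats 2000000 in
lemma card_magicS (k : ℕ) : (magicS k).card = 8 * (magicF k).card := by
  rw [magicS_eq]
  rw [Finset.card_image_of_injOn, card_product, card_univ, Fintype.card_fin]
  rintro ⟨i, a, b⟩ hm ⟨j, a', b'⟩ hm' he
  simp only [coe_product, Set.mem_prod, mem_coe, mem_magicF] at hm hm'
  obtain ⟨-, hm⟩ := hm
  obtain ⟨-, hm'⟩ := hm'
  fin_cases i <;> fin_cases j <;> simp [oct, Prod.mk.injEq] at he ⊢ <;>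
    first
      | (refine ⟨rfl, ?_, ?_⟩ <;> omega)
      | (constructor <;> omega)
      | omega
      | (exfalso; omega)

lemma ioc_insert (a n : ℤ) (h : a ≤ n) : Ioc a (n+1) = insert (n+1) (Ioc a n) := by
  ext x; simp only [mem_Ioc, mem_insert]; omega

lemma sumlin (c : ℤ) (n : ℕ) : ∑ b ∈ Ioc (0:ℤ) (n:ℤ), (c - 2*b) = n*c - n*(n+1) := by
  induction n with
  | zero => simp
  | succ m ih =>
      push_cast
      rw [ioc_insert 0 m (by positivity), Finset.sum_insert (by simp)]
      rw [ih]; push_cast; ring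

lemma sumsplit (f : ℤ → ℤ) (a b c : ℤ) (h1 : a ≤ b) (h2 : b ≤ c) :
    ∑ x ∈ Ioc a c, f x = ∑ x ∈ Ioc a b, f x + ∑ x ∈ Ioc b c, f x := by
  rw [← Finset.sum_union, Ioc_union_Ioc_eq_Ioc h1 h2]
  simp only [Finset.disjoint_left, mem_Ioc]
  intro x hx hx2; omega

lemma sumlin' (c : ℤ) (m n : ℕ) (h : m ≤ n) :
    ∑ b ∈ Ioc (m:ℤ) (n:ℤ), (c - 2*b) = ((n:ℤ)-m)*c - (n*(n+1) - m*(m+1)) := by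
  have := sumsplit (fun b => c - 2*b) 0 m n (by positivity) (by exact_mod_cast h)
  rw [sumlin c n, sumlin c m] at this
  linarith

lemma card_magicF (k : ℕ) : ((magicF k).card : ℤ) = 9*k*k - 5*k := by
  have h1 : (magicF k).card = ∑ b ∈ Icc (1:ℤ) (6*k), ((magicF k).filter (fun p => p.2 = b)).card :=
    Finset.card_eq_sum_card_fiberwise (by
      intro p hp; rw [mem_coe, mem_magicF] at hp; rw [mem_coe, mem_Icc]; omega)
  have h2 : ∀ b ∈ Icc (1:ℤ) (6*k:ℤ), ((magicF k).filter (fun p => p.2 = b)).card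
      = ((Ioc b (6*k-b)).filter (fun a => a ≠ 2*b)).card := by
    intro b hb
    rw [mem_Icc] at hb
    rw [← Finset.card_image_of_injective ((Ioc b (6*k-b)).filter (fun a => a ≠ 2*b))
        (f := fun a => ((a, b) : ℤ × ℤ)) (fun a a' h => by simpa using h)]
    congr 1
    ext ⟨x, y⟩
    simp only [Finset.mem_filter, mem_magicF, Finset.mem_image, Finset.mem_Ioc]
    constructor
    · rintro ⟨⟨hb2, hlt, hsum, hne⟩, rfl⟩
      exact ⟨x, ⟨⟨by omega, by omega⟩, by simpa using hne⟩, rfl⟩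
    · rintro ⟨a, ⟨⟨ha1, ha2⟩, ha3⟩, heq⟩
      simp only [Prod.mk.injEq] at heq
      obtain ⟨rfl, rfl⟩ := heq
      exact ⟨⟨by omega, by omega, by omega, ha3⟩, rfl⟩
  have h3 : ∀ b ∈ Icc (1:ℤ) (6*k:ℤ), (((Ioc b (6*k-b)).filter (fun a => a ≠ 2*b)).card : ℤ)
      = if b ≤ 2*k then 6*k - 2*b - 1 else (if b ≤ 3*k then 6*k - 2*b else 0) := by
    intro b hb
    rw [mem_Icc] at hb
    rw [Finset.filter_ne']
    by_cases hmem : (2*b) ∈ Ioc b (6*k-b)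
    · rw [Finset.card_erase_of_mem hmem, Int.card_Ioc]
      rw [mem_Ioc] at hmem
      have hb2 : b ≤ 2*k := by omega
      rw [if_pos hb2]
      omega
    · rw [Finset.erase_eq_of_notMem hmem, Int.card_Ioc]
      rw [mem_Ioc] at hmem
      have hb2 : ¬ (b ≤ 2*k) := by omega
      rw [if_neg hb2]
      split_ifs with hb3 <;> omega
  have h4 : ((magicF k).card : ℤ)
      = ∑ b ∈ Icc (1:ℤ) (6*k), ((if b ≤ 2*k then 6*k - 2*b - 1 else (if b ≤ 3*k then 6*k - 2*b else 0)) : ℤ) := by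
    rw [h1]
    push_cast
    refine Finset.sum_congr rfl ?_
    intro b hb
    rw [h2 b hb]
    exact h3 b hb
  have hIcc : Icc (1:ℤ) (6*k) = Ioc (0:ℤ) (6*k) := by
    ext x; simp only [mem_Icc, mem_Ioc]; omega
  rw [h4, hIcc]
  rw [sumsplit _ 0 (3*k) (6*k) (by positivity) (by omega)]
  rw [sumsplit _ 0 (2*k) (3*k) (by positivity) (by omega)]
  have e1 : ∑ b ∈ Ioc (0:ℤ) (2*k:ℤ), ((if b ≤ 2*k then 6*k - 2*b - 1 else (if b ≤ 3*k then 6*k - 2*b else 0)) : ℤ)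
      = ∑ b ∈ Ioc (0:ℤ) (2*k:ℤ), ((6*k - 1 : ℤ) - 2*b) := by
    refine Finset.sum_congr rfl ?_
    intro b hb; rw [mem_Ioc] at hb
    rw [if_pos (by omega)]; ring
  have e2 : ∑ b ∈ Ioc (2*k:ℤ) (3*k:ℤ), ((if b ≤ 2*k then 6*k - 2*b - 1 else (if b ≤ 3*k then 6*k - 2*b else 0)) : ℤ)
      = ∑ b ∈ Ioc (2*k:ℤ) (3*k:ℤ), ((6*k : ℤ) - 2*b) := by
    refine Finset.sum_congr rfl ?_
    intro b hb; rw [mem_Ioc] at hb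
    rw [if_neg (by omega), if_pos (by omega)]
  have e3 : ∑ b ∈ Ioc (3*k:ℤ) (6*k:ℤ), ((if b ≤ 2*k then 6*k - 2*b - 1 else (if b ≤ 3*k then 6*k - 2*b else 0)) : ℤ)
      = 0 := by
    refine Finset.sum_eq_zero ?_
    intro b hb; rw [mem_Ioc] at hb
    rw [if_neg (by omega), if_neg (by omega)]
  rw [e1, e2, e3]
  have g1 : ((2*k:ℕ):ℤ) = 2*(k:ℤ) := by push_cast; ring
  have g2 : ((3*k:ℕ):ℤ) = 3*(k:ℤ) := by push_cast; ring
  have s1 := sumlin ((6*k:ℤ) - 1) (2*k)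
  have s2 := sumlin' ((6*k:ℤ)) (2*k) (3*k) (by omega)
  rw [g1] at s1 s2
  rw [g2] at s2
  rw [s1, s2]
  push_cast
  ring

theorem a3_formula_mod18_3 (t : ℕ) (ht : 0 < t) (h : t % 18 = 3) :
    (a3 t : ℚ) = (2 * (t : ℚ) ^ 2 - 32 * (t : ℚ) + 78) / 9 := by
  obtain ⟨k, rfl⟩ : ∃ k, t = 18*k+3 := ⟨(t-3)/18, by omega⟩
  have hinj : Set.InjOn (mf k) ↑(magicS k) := by
    intro p hp q hq he
    rw [mem_coe, mem_magicS] at hp hq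
    obtain ⟨p1, p2, p3, p4, -⟩ := hp
    obtain ⟨q1, q2, q3, q4, -⟩ := hq
    have e1 : ((6*k+1:ℤ) + p.1).toNat = ((6*k+1:ℤ) + q.1).toNat := congrFun (congrFun he 0) 0
    have e2 : ((6*k+1:ℤ) + p.2).toNat = ((6*k+1:ℤ) + q.2).toNat := congrFun (congrFun he 0) 2
    have hx : p.1 = q.1 := by omega
    have hy : p.2 = q.2 := by omega
    exact Prod.ext_iff.mpr ⟨hx, hy⟩
  have hcard : a3 (18*k+3) = 8 * (magicF k).card := by
    unfold a3
    rw [setEq k, Set.ncard_coe_finset, Finset.card_image_of_injOn hinj, card_magicS]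
  rw [hcard]
  have hF : (((magicF k).card : ℚ)) = 9*(k:ℚ)*k - 5*k := by
    exact_mod_cast congrArg (fun z : ℤ => (z : ℚ)) (card_magicF k)
  push_cast [hF]
  field_simp
  ring
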